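/- Let ζ and ζ' be exchangeable random vectors constructed as follows: ζ = (ζ_1,...,ζ_d) has independent mean-zero unit-variance components, ζ' replaces a uniformly random coordinate ζ_I by an independent copy ζ'_I. For a d×d symmetric matrix Q with diagonal part Q̌, set w = ζᵀQζ − tr(Q), w̌ = ζᵀQ̌ζ − tr(Q). Then E[w' − w | ζ] = −(2/d) w + (1/d) w̌ and E[w̌' − w̌ | ζ] = −(1/d) w̌. -/

import Mathlib

open MeasureTheory ProbabilityTheory

lemma my_indep_sup {Ω : Type*} {mΩ : MeasurableSpace Ω} {μ : Measure Ω}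
    [IsProbabilityMeasure μ] {m₁ m₂ m₃ : MeasurableSpace Ω}
    (h₁ : m₁ ≤ mΩ) (h₂ : m₂ ≤ mΩ) (h₃ : m₃ ≤ mΩ)
    (h12 : Indep m₁ (m₂ ⊔ m₃) μ) (h23 : Indep m₂ m₃ μ) :
    Indep (m₁ ⊔ m₂) m₃ μ := by
  rw [Indep_iff] at h12 h23
  set p1 : Set (Set Ω) :=
    {s | ∃ s₁ s₂, MeasurableSet[m₁] s₁ ∧ MeasurableSet[m₂] s₂ ∧ s = s₁ ∩ s₂} with hp1def
  set p2 : Set (Set Ω) := {s | MeasurableSet[m₃] s} with hp2def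
  have hgen1 : m₁ ⊔ m₂ = MeasurableSpace.generateFrom p1 := by
    refine le_antisymm (sup_le ?_ ?_) (MeasurableSpace.generateFrom_le ?_)
    · intro s hs
      exact MeasurableSpace.measurableSet_generateFrom ⟨s, Set.univ, hs, MeasurableSet.univ,
        (Set.inter_univ s).symm⟩
    · intro s hs
      exact MeasurableSpace.measurableSet_generateFrom ⟨Set.univ, s, MeasurableSet.univ, hs,
        (Set.univ_inter s).symm⟩
    · rintro s ⟨s₁, s₂, hs₁, hs₂, rfl⟩
      exact ((le_sup_left : m₁ ≤ m₁ ⊔ m₂) _ hs₁).inter ((le_sup_right : m₂ ≤ m₁ ⊔ m₂) _ hs₂)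
  have hgen2 : m₃ = MeasurableSpace.generateFrom p2 :=
    (MeasurableSpace.generateFrom_measurableSet).symm
  rw [hgen1, hgen2]
  refine IndepSets.indep' ?_ ?_ ?_ ?_ ?_
  · rintro s ⟨s₁, s₂, hs₁, hs₂, rfl⟩
    exact (h₁ _ hs₁).inter (h₂ _ hs₂)
  · exact fun s hs => h₃ _ hs
  · rintro s ⟨s₁, s₂, hs₁, hs₂, rfl⟩ t ⟨t₁, t₂, ht₁, ht₂, rfl⟩ -
    exact ⟨s₁ ∩ t₁, s₂ ∩ t₂, hs₁.inter ht₁, hs₂.inter ht₂, by ac_rfl⟩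
  · intro s hs t ht _
    exact hs.inter ht
  · rw [IndepSets_iff]
    rintro s t ⟨s₁, s₂, hs₁, hs₂, rfl⟩ ht
    have hs₂' : MeasurableSet[m₂ ⊔ m₃] s₂ := (le_sup_left : m₂ ≤ m₂ ⊔ m₃) _ hs₂
    have hst : MeasurableSet[m₂ ⊔ m₃] (s₂ ∩ t) :=
      hs₂'.inter ((le_sup_right : m₃ ≤ m₂ ⊔ m₃) _ ht)
    calc μ (s₁ ∩ s₂ ∩ t) = μ (s₁ ∩ (s₂ ∩ t)) := by rw [Set.inter_assoc]
      _ = μ s₁ * μ (s₂ ∩ t) := h12 _ _ hs₁ hst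
      _ = μ s₁ * (μ s₂ * μ t) := by rw [h23 _ _ hs₂ ht]
      _ = μ s₁ * μ s₂ * μ t := by ring
      _ = μ (s₁ ∩ s₂) * μ t := by rw [h12 _ _ hs₁ hs₂']

lemma my_comap_prodMk {Ω α β : Type*} [mα : MeasurableSpace α] [mβ : MeasurableSpace β]
    (A : Ω → α) (B : Ω → β) :
    MeasurableSpace.comap (fun ω => (A ω, B ω)) inferInstance
      = MeasurableSpace.comap A mα ⊔ MeasurableSpace.comap B mβ := by
  show MeasurableSpace.comap _ (mα.comap Prod.fst ⊔ mβ.comap Prod.snd) = _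
  rw [MeasurableSpace.comap_sup, MeasurableSpace.comap_comp, MeasurableSpace.comap_comp]
  rfl

lemma my_indepFun_prodMk {Ω α β γ : Type*} {mΩ : MeasurableSpace Ω} {μ : Measure Ω}
    [IsProbabilityMeasure μ]
    [MeasurableSpace α] [MeasurableSpace β] [MeasurableSpace γ]
    {A : Ω → α} {B : Ω → β} {C : Ω → γ}
    (hA : Measurable A) (hB : Measurable B) (hC : Measurable C)
    (h1 : IndepFun A (fun ω => (B ω, C ω)) μ) (h2 : IndepFun B C μ) :
    IndepFun (fun ω => (A ω, B ω)) C μ := by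
  rw [IndepFun_iff_Indep] at h1 h2 ⊢
  rw [my_comap_prodMk A B]
  rw [my_comap_prodMk B C] at h1
  exact my_indep_sup hA.comap_le hB.comap_le hC.comap_le h1 h2

lemma my_condexp_indep {Ω γ : Type*} [MeasureSpace Ω] [IsProbabilityMeasure (ℙ : Measure Ω)]
    [MeasurableSpace γ] {f : Ω → ℝ} {g : Ω → γ} (hf : Measurable f) (hg : Measurable g)
    (h : IndepFun f g ℙ) :
    ℙ[f | MeasurableSpace.comap g inferInstance] =ᵐ[ℙ] fun _ => ∫ ω, f ω ∂ℙ := by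
  rw [IndepFun_iff_Indep] at h
  exact condExp_indep_eq hf.comap_le hg.comap_le
    ((measurable_iff_comap_le.mpr le_rfl).stronglyMeasurable) h

lemma my_integrable_mul {Ω : Type*} [MeasureSpace Ω] {f g : Ω → ℝ}
    (hf : MemLp f 2 ℙ) (hg : MemLp g 2 ℙ) :
    Integrable (fun ω => f ω * g ω) ℙ := by
  exact MemLp.integrable_mul (p := 2) (q := 2) hf hg

lemma my_expand {d : ℕ} (Q : Matrix (Fin d) (Fin d) ℝ) (x : Fin d → ℝ) (c : ℝ) (k : Fin d) :
    ∑ i, ∑ j, Q i j * (if i = k then c else x i) * (if j = k then c else x j)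
      = Q k k * c ^ 2 + c * (∑ j ∈ Finset.univ.erase k, Q k j * x j)
        + (∑ i ∈ Finset.univ.erase k, Q i k * x i) * c
        + ∑ i ∈ Finset.univ.erase k, ∑ j ∈ Finset.univ.erase k, Q i j * x i * x j := by
  rw [← Finset.add_sum_erase _ _ (Finset.mem_univ k)]
  simp only [eq_self_iff_true, if_true]
  rw [← Finset.add_sum_erase _ (fun j => Q k j * c * (if j = k then c else x j))
    (Finset.mem_univ k), if_pos rfl]
  have h1 : ∑ j ∈ Finset.univ.erase k, Q k j * c * (if j = k then c else x j)
      = c * ∑ j ∈ Finset.univ.erase k, Q k j * x j := by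
    rw [Finset.mul_sum]
    refine Finset.sum_congr rfl fun j hj => ?_
    rw [if_neg (Finset.ne_of_mem_erase hj)]; ring
  have h2 : ∀ i ∈ Finset.univ.erase k,
      ∑ j, Q i j * (if i = k then c else x i) * (if j = k then c else x j)
      = Q i k * x i * c + ∑ j ∈ Finset.univ.erase k, Q i j * x i * x j := by
    intro i hi
    rw [← Finset.add_sum_erase _ _ (Finset.mem_univ k), if_pos rfl,
      if_neg (Finset.ne_of_mem_erase hi)]
    congr 1
    refine Finset.sum_congr rfl fun j hj => ?_
    rw [if_neg (Finset.ne_of_mem_erase hj)]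
  rw [Finset.sum_congr rfl h2, Finset.sum_add_distrib, h1, Finset.sum_mul]
  ring

lemma my_quad_diff {d : ℕ} (Q : Matrix (Fin d) (Fin d) ℝ) (hQ : Q.IsSymm)
    (x b : Fin d → ℝ) (k : Fin d) :
    ((∑ i, ∑ j, Q i j * (if i = k then b i else x i) * (if j = k then b j else x j))
      - ∑ i, ∑ j, Q i j * x i * x j)
    = Q k k * ((b k) ^ 2 - (x k) ^ 2)
      + (∑ j ∈ Finset.univ.erase k, 2 * Q k j * x j) * (b k - x k) := by
  have e1 : ∑ i, ∑ j, Q i j * (if i = k then b i else x i) * (if j = k then b j else x j)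
      = ∑ i, ∑ j, Q i j * (if i = k then b k else x i) * (if j = k then b k else x j) := by
    refine Finset.sum_congr rfl fun i _ => Finset.sum_congr rfl fun j _ => ?_
    congr 1
    · congr 1
      split_ifs with h <;> simp [h]
    · split_ifs with h <;> simp [h]
  have e2 : ∑ i, ∑ j, Q i j * x i * x j
      = ∑ i, ∑ j, Q i j * (if i = k then x k else x i) * (if j = k then x k else x j) := by
    refine Finset.sum_congr rfl fun i _ => Finset.sum_congr rfl fun j _ => ?_
    congr 1
    · congr 1
      split_ifs with h <;> simp [h]
    · split_ifs with h <;> simp [h]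
  rw [e1, e2, my_expand, my_expand]
  have hsym : ∀ i ∈ Finset.univ.erase k, Q i k * x i = Q k i * x i := fun i _ => by
    rw [hQ.apply]
  rw [Finset.sum_congr rfl hsym]
  have h2 : ∑ j ∈ Finset.univ.erase k, 2 * Q k j * x j
      = 2 * ∑ j ∈ Finset.univ.erase k, Q k j * x j := by
    rw [Finset.mul_sum]; exact Finset.sum_congr rfl fun j _ => by ring
  rw [h2]
  ring

lemma my_diag_diff {d : ℕ} (Q : Matrix (Fin d) (Fin d) ℝ) (x b : Fin d → ℝ) (k : Fin d) :
    ((∑ i, Q i i * (if i = k then b i else x i) ^ 2) - ∑ i, Q i i * (x i) ^ 2)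
      = Q k k * ((b k) ^ 2 - (x k) ^ 2) := by
  rw [← Finset.sum_sub_distrib]
  rw [Finset.sum_eq_single k]
  · rw [if_pos rfl]; ring
  · intro i _ hik
    rw [if_neg hik]; ring
  · exact fun h => absurd (Finset.mem_univ k) h


/-- Linear regression property of the exchangeable pair `(w, w̌) , (w', w̌')`:
`E[w' − w | ζ] = −(2/d) w + (1/d) w̌` and `E[w̌' − w̌ | ζ] = −(1/d) w̌`. -/
theorem stmt15 {Ω : Type*} [MeasureSpace Ω] [IsProbabilityMeasure (ℙ : Measure Ω)]
    {d : ℕ} (hd : 0 < d)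
    (Q : Matrix (Fin d) (Fin d) ℝ) (hQ : Q.IsSymm)
    (ζ ζ' : Fin d → Ω → ℝ) (I : Ω → Fin d)
    (hmeas : ∀ i, Measurable (ζ i)) (hmeas' : ∀ i, Measurable (ζ' i)) (hI : Measurable I)
    -- the 2d variables ζ₁,…,ζ_d,ζ'₁,…,ζ'_d are jointly independent
    (hindep : iIndepFun (Sum.elim ζ ζ') ℙ)
    -- the random index I is independent of (ζ, ζ')
    (hIindep : IndepFun
      (fun ω => ((fun i => ζ i ω, fun i => ζ' i ω) : (Fin d → ℝ) × (Fin d → ℝ))) I ℙ)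
    -- I is uniformly distributed on {1,…,d}
    (hunif : ∀ k : Fin d, ℙ (I ⁻¹' {k}) = (d : ENNReal)⁻¹)
    -- ζ'_i is an independent copy of ζ_i
    (hid : ∀ i, IdentDistrib (ζ i) (ζ' i) ℙ ℙ)
    (hL2 : ∀ i, MemLp (ζ i) 2 ℙ)
    (hmean : ∀ i, ∫ ω, ζ i ω ∂ℙ = 0) (hvar : ∀ i, ∫ ω, (ζ i ω) ^ 2 ∂ℙ = 1)
    (w w' wc wc' : Ω → ℝ)
    (hw : w = fun ω => (∑ i, ∑ j, Q i j * ζ i ω * ζ j ω) - Q.trace)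
    (hwc : wc = fun ω => (∑ i, Q i i * (ζ i ω) ^ 2) - Q.trace)
    (hw' : w' = fun ω => (∑ i, ∑ j, Q i j * (if i = I ω then ζ' i ω else ζ i ω)
        * (if j = I ω then ζ' j ω else ζ j ω)) - Q.trace)
    (hwc' : wc' = fun ω =>
      (∑ i, Q i i * (if i = I ω then ζ' i ω else ζ i ω) ^ 2) - Q.trace) :
    ℙ[w' - w | MeasurableSpace.comap (fun ω (i : Fin d) => ζ i ω) inferInstance]
        =ᵐ[ℙ] (fun ω => -(2 / (d : ℝ)) * w ω + (1 / (d : ℝ)) * wc ω)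
    ∧ ℙ[wc' - wc | MeasurableSpace.comap (fun ω (i : Fin d) => ζ i ω) inferInstance]
        =ᵐ[ℙ] (fun ω => -(1 / (d : ℝ)) * wc ω) := by
  classical
  subst hw hwc hw' hwc'
  -- notation
  set Z : Ω → (Fin d → ℝ) := fun ω (i : Fin d) => ζ i ω with hZdef
  have hZ : Measurable Z := measurable_pi_lambda _ hmeas
  have hZm : Measurable[MeasurableSpace.comap Z inferInstance] Z :=
    measurable_iff_comap_le.mpr le_rfl
  have hζm : ∀ i, Measurable[MeasurableSpace.comap Z inferInstance] (ζ i) :=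
    fun i => (measurable_pi_apply i).comp hZm
  -- L2 facts
  have hL2' : ∀ i, MemLp (ζ' i) 2 ℙ := fun i => (hid i).memLp_snd (hL2 i)
  have hone : (1 : ENNReal) ≤ 2 := one_le_two
  -- indicator functions
  set U : Fin d → Ω → ℝ := fun k ω => if I ω = k then (1:ℝ) else 0 with hUdef
  have hUind : ∀ k ω, U k ω = (I ⁻¹' {k}).indicator (fun _ => (1:ℝ)) ω := by
    intro k ω
    simp [hUdef, Set.indicator_apply]
  have hUmeas : ∀ k, Measurable (U k) :=
    fun k => Measurable.ite (hI (measurableSet_singleton k)) measurable_const measurable_const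
  have hUbdd : ∀ k, ∀ᵐ ω ∂ℙ, ‖U k ω‖ ≤ (1:ℝ) := by
    intro k; refine Filter.Eventually.of_forall fun ω => ?_
    simp only [hUdef]; split_ifs <;> simp
  have hUint : ∀ k, Integrable (U k) ℙ := by
    intro k
    refine ((integrable_const (1:ℝ)).indicator (hI (measurableSet_singleton k))).congr ?_
    exact Filter.Eventually.of_forall fun ω => (hUind k ω).symm
  have hUval : ∀ k, ∫ ω, U k ω ∂ℙ = (d : ℝ)⁻¹ := by
    intro k
    rw [integral_congr_ae (Filter.Eventually.of_forall (hUind k)),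
      integral_indicator_const (1:ℝ) (hI (measurableSet_singleton k)), measureReal_def, hunif k]
    simp [ENNReal.toReal_inv]
  -- moments of ζ'
  have hmean' : ∀ i, ∫ ω, ζ' i ω ∂ℙ = 0 := fun i => ((hid i).integral_eq).symm.trans (hmean i)
  have hvar' : ∀ i, ∫ ω, (ζ' i ω) ^ 2 ∂ℙ = 1 := fun i =>
    (((hid i).comp (measurable_id.pow_const 2)).integral_eq).symm.trans (hvar i)
  -- the key independence : (I, ζ' k) ⊥ Z
  have hpair : ∀ k, IndepFun (fun ω => (I ω, ζ' k ω)) Z ℙ := by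
    intro k
    have h1 : IndepFun I (fun ω => (ζ' k ω, Z ω)) ℙ := by
      have hc : Measurable (fun p : (Fin d → ℝ) × (Fin d → ℝ) => (p.2 k, p.1)) :=
        ((measurable_pi_apply k).comp measurable_snd).prodMk measurable_fst
      exact hIindep.symm.comp measurable_id hc
    have h2 : IndepFun (ζ' k) Z ℙ := by
      have hdisj : Disjoint ({Sum.inr k} : Finset (Fin d ⊕ Fin d))
          (Finset.univ.map ⟨Sum.inl, Sum.inl_injective⟩) := by
        simp [Finset.disjoint_left]
      have hallmeas : ∀ i : Fin d ⊕ Fin d, Measurable (Sum.elim ζ ζ' i) := by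
        rintro (i | i)
        · exact hmeas i
        · exact hmeas' i
      have hbase := hindep.indepFun_finset {Sum.inr k}
        (Finset.univ.map ⟨Sum.inl, Sum.inl_injective⟩) hdisj hallmeas
      have hφ : Measurable (fun v : ({Sum.inr k} : Finset (Fin d ⊕ Fin d)) → ℝ =>
          v ⟨Sum.inr k, Finset.mem_singleton_self _⟩) := measurable_pi_apply _
      have hψ : Measurable (fun v : (Finset.univ.map ⟨Sum.inl (β := Fin d), Sum.inl_injective⟩
            : Finset (Fin d ⊕ Fin d)) → ℝ =>
          (fun i : Fin d => v ⟨Sum.inl i, by simp⟩)) :=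
        measurable_pi_lambda _ (fun i => measurable_pi_apply _)
      exact hbase.comp hφ hψ
    exact my_indepFun_prodMk hI (hmeas' k) hZ h1 h2
  -- building blocks
  set V1 : Fin d → Ω → ℝ := fun k ω => U k ω * (ζ' k ω) ^ 2 with hV1def
  set V2 : Fin d → Ω → ℝ := fun k ω => U k ω * ζ' k ω with hV2def
  have hV1meas : ∀ k, Measurable (V1 k) := fun k => (hUmeas k).mul ((hmeas' k).pow_const 2)
  have hV2meas : ∀ k, Measurable (V2 k) := fun k => (hUmeas k).mul (hmeas' k)
  have hV1int : ∀ k, Integrable (V1 k) ℙ := fun k =>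
    ((hL2' k).integrable_sq).bdd_mul (hUmeas k).aestronglyMeasurable (hUbdd k)
  have hV2int : ∀ k, Integrable (V2 k) ℙ := fun k =>
    ((hL2' k).integrable hone).bdd_mul (hUmeas k).aestronglyMeasurable (hUbdd k)
  -- independence of blocks from Z
  have hV1ind : ∀ k, IndepFun (V1 k) Z ℙ := by
    intro k
    have hφ : Measurable (fun p : Fin d × ℝ => (if p.1 = k then (1:ℝ) else 0) * p.2 ^ 2) :=
      ((measurable_const.ite (measurable_fst (measurableSet_singleton k)) measurable_const)).mul
        (measurable_snd.pow_const 2)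
    exact (hpair k).comp hφ measurable_id
  have hV2ind : ∀ k, IndepFun (V2 k) Z ℙ := by
    intro k
    have hφ : Measurable (fun p : Fin d × ℝ => (if p.1 = k then (1:ℝ) else 0) * p.2) :=
      ((measurable_const.ite (measurable_fst (measurableSet_singleton k)) measurable_const)).mul
        measurable_snd
    exact (hpair k).comp hφ measurable_id
  have hUind : ∀ k, IndepFun (U k) Z ℙ := by
    intro k
    have hφ : Measurable (fun p : Fin d × ℝ => (if p.1 = k then (1:ℝ) else 0)) :=
      measurable_const.ite (measurable_fst (measurableSet_singleton k)) measurable_const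
    exact (hpair k).comp hφ measurable_id
  -- integrals of blocks
  have hUζ'ind : ∀ k, IndepFun (U k) (fun ω => (ζ' k ω) ^ 2) ℙ := by
    intro k
    have hφ : Measurable (fun i : Fin d => if i = k then (1:ℝ) else 0) :=
      measurable_of_countable _
    have hψ : Measurable (fun p : (Fin d → ℝ) × (Fin d → ℝ) => (p.2 k) ^ 2) :=
      ((measurable_pi_apply k).comp measurable_snd).pow_const 2
    exact hIindep.symm.comp hφ hψ
  have hUζ'ind2 : ∀ k, IndepFun (U k) (ζ' k) ℙ := by
    intro k
    have hφ : Measurable (fun i : Fin d => if i = k then (1:ℝ) else 0) :=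
      measurable_of_countable _
    have hψ : Measurable (fun p : (Fin d → ℝ) × (Fin d → ℝ) => p.2 k) :=
      (measurable_pi_apply k).comp measurable_snd
    exact hIindep.symm.comp hφ hψ
  have hV1val : ∀ k, ∫ ω, V1 k ω ∂ℙ = (d : ℝ)⁻¹ := by
    intro k
    have h0 := (hUζ'ind k).integral_mul_eq_mul_integral (hUint k).aestronglyMeasurable ((hL2' k).integrable_sq).aestronglyMeasurable
    have h1 : ∫ ω, U k ω * (ζ' k ω) ^ 2 ∂ℙ
        = (∫ ω, U k ω ∂ℙ) * ∫ ω, (ζ' k ω) ^ 2 ∂ℙ := h0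
    rw [hV1def]
    simp only []
    rw [h1, hUval k, hvar' k, mul_one]
  have hV2val : ∀ k, ∫ ω, V2 k ω ∂ℙ = 0 := by
    intro k
    have h0 := (hUζ'ind2 k).integral_mul_eq_mul_integral (hUint k).aestronglyMeasurable ((hL2' k).integrable hone).aestronglyMeasurable
    have h1 : ∫ ω, U k ω * ζ' k ω ∂ℙ
        = (∫ ω, U k ω ∂ℙ) * ∫ ω, ζ' k ω ∂ℙ := h0
    rw [hV2def]
    simp only []
    rw [h1, hmean' k, mul_zero]
  -- conditional expectations of blocks
  have hcV1 : ∀ k, ℙ[V1 k | MeasurableSpace.comap Z inferInstance] =ᵐ[ℙ] fun _ => (d:ℝ)⁻¹ := by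
    intro k
    refine (my_condexp_indep (hV1meas k) hZ (hV1ind k)).trans ?_
    rw [hV1val k]
  have hcV2 : ∀ k, ℙ[V2 k | MeasurableSpace.comap Z inferInstance] =ᵐ[ℙ] fun _ => (0:ℝ) := by
    intro k
    refine (my_condexp_indep (hV2meas k) hZ (hV2ind k)).trans ?_
    rw [hV2val k]
  have hcU : ∀ k, ℙ[U k | MeasurableSpace.comap Z inferInstance] =ᵐ[ℙ] fun _ => (d:ℝ)⁻¹ := by
    intro k
    refine (my_condexp_indep (hUmeas k) hZ (hUind k)).trans ?_
    rw [hUval k]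
  -- m-measurable coefficient functions
  set S : Fin d → Ω → ℝ := fun k ω => ∑ j ∈ Finset.univ.erase k, 2 * Q k j * ζ j ω with hSdef
  have hSm : ∀ k, Measurable[MeasurableSpace.comap Z inferInstance] (S k) := fun k =>
    Finset.measurable_sum _ (fun j _ => ((hζm j).const_mul (2 * Q k j)))
  have hSL2 : ∀ k, MemLp (S k) 2 ℙ := fun k =>
    memLp_finset_sum _ (fun j _ => ((hL2 j).const_mul (2 * Q k j)))
  set g : Fin d → Ω → ℝ := fun k ω => -(Q k k * (ζ k ω) ^ 2) - S k ω * ζ k ω with hgdef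
  have hgm : ∀ k, Measurable[MeasurableSpace.comap Z inferInstance] (g k) := fun k =>
    ((((hζm k).pow_const 2).const_mul (Q k k)).neg).sub ((hSm k).mul (hζm k))
  have hgint : ∀ k, Integrable (g k) ℙ := fun k =>
    ((((hL2 k).integrable_sq).const_mul (Q k k)).neg).sub (my_integrable_mul (hSL2 k) (hL2 k))
  set g2 : Fin d → Ω → ℝ := fun k ω => -(Q k k * (ζ k ω) ^ 2) with hg2def
  have hg2m : ∀ k, Measurable[MeasurableSpace.comap Z inferInstance] (g2 k) := fun k =>
    (((hζm k).pow_const 2).const_mul (Q k k)).neg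
  have hg2int : ∀ k, Integrable (g2 k) ℙ := fun k =>
    (((hL2 k).integrable_sq).const_mul (Q k k)).neg
  -- integrability of composite terms
  have hQV1int : ∀ k, Integrable (fun ω => Q k k * V1 k ω) ℙ := fun k => (hV1int k).const_mul _
  have hSV2int : ∀ k, Integrable (fun ω => S k ω * V2 k ω) ℙ := by
    intro k
    have h0 : Integrable (fun ω => U k ω * (S k ω * ζ' k ω)) ℙ :=
      (my_integrable_mul (hSL2 k) (hL2' k)).bdd_mul (hUmeas k).aestronglyMeasurable (hUbdd k)
    exact h0.congr (Filter.Eventually.of_forall fun ω => by simp only [hV2def]; ring)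
  have hgUint : ∀ k, Integrable (fun ω => g k ω * U k ω) ℙ := by
    intro k
    have h0 : Integrable (fun ω => U k ω * g k ω) ℙ :=
      (hgint k).bdd_mul (hUmeas k).aestronglyMeasurable (hUbdd k)
    exact h0.congr (Filter.Eventually.of_forall fun ω => by ring)
  have hg2Uint : ∀ k, Integrable (fun ω => g2 k ω * U k ω) ℙ := by
    intro k
    have h0 : Integrable (fun ω => U k ω * g2 k ω) ℙ :=
      (hg2int k).bdd_mul (hUmeas k).aestronglyMeasurable (hUbdd k)
    exact h0.congr (Filter.Eventually.of_forall fun ω => by ring)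
  -- conditional expectations of the three kinds of terms
  have hA : ∀ k, ℙ[(fun ω => Q k k * V1 k ω) | MeasurableSpace.comap Z inferInstance]
      =ᵐ[ℙ] fun _ => Q k k * (d:ℝ)⁻¹ := by
    intro k
    refine (condExp_smul (μ := ℙ) (m := MeasurableSpace.comap Z inferInstance)
      (Q k k) (V1 k)).trans ?_
    filter_upwards [hcV1 k] with ω hω
    simp only [Pi.smul_apply, smul_eq_mul, hω]
  have hB : ∀ k, ℙ[(fun ω => S k ω * V2 k ω) | MeasurableSpace.comap Z inferInstance]
      =ᵐ[ℙ] fun _ => (0:ℝ) := by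
    intro k
    refine (condExp_mul_of_stronglyMeasurable_left (hSm k).stronglyMeasurable
      (hSV2int k) (hV2int k)).trans ?_
    filter_upwards [hcV2 k] with ω hω
    simp only [Pi.mul_apply, hω, mul_zero]
  have hC : ∀ k, ℙ[(fun ω => g k ω * U k ω) | MeasurableSpace.comap Z inferInstance]
      =ᵐ[ℙ] fun ω => g k ω * (d:ℝ)⁻¹ := by
    intro k
    refine (condExp_mul_of_stronglyMeasurable_left (hgm k).stronglyMeasurable
      (hgUint k) (hUint k)).trans ?_
    filter_upwards [hcU k] with ω hω
    simp only [Pi.mul_apply, hω]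
  have hC2 : ∀ k, ℙ[(fun ω => g2 k ω * U k ω) | MeasurableSpace.comap Z inferInstance]
      =ᵐ[ℙ] fun ω => g2 k ω * (d:ℝ)⁻¹ := by
    intro k
    refine (condExp_mul_of_stronglyMeasurable_left (hg2m k).stronglyMeasurable
      (hg2Uint k) (hUint k)).trans ?_
    filter_upwards [hcU k] with ω hω
    simp only [Pi.mul_apply, hω]
  -- the summand functions
  set F : Fin d → Ω → ℝ := fun k =>
    (fun ω => Q k k * V1 k ω) + (fun ω => S k ω * V2 k ω) + (fun ω => g k ω * U k ω) with hFdef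
  have hFint : ∀ k, Integrable (F k) ℙ := fun k => ((hQV1int k).add (hSV2int k)).add (hgUint k)
  set F2 : Fin d → Ω → ℝ := fun k =>
    (fun ω => Q k k * V1 k ω) + (fun ω => g2 k ω * U k ω) with hF2def
  have hF2int : ∀ k, Integrable (F2 k) ℙ := fun k => (hQV1int k).add (hg2Uint k)
  have hcF : ∀ k, ℙ[F k | MeasurableSpace.comap Z inferInstance]
      =ᵐ[ℙ] fun ω => (Q k k + g k ω) * (d:ℝ)⁻¹ := by
    intro k
    calc ℙ[F k | MeasurableSpace.comap Z inferInstance]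
        =ᵐ[ℙ] ℙ[(fun ω => Q k k * V1 k ω) + (fun ω => S k ω * V2 k ω) |
            MeasurableSpace.comap Z inferInstance]
          + ℙ[(fun ω => g k ω * U k ω) | MeasurableSpace.comap Z inferInstance] :=
        condExp_add ((hQV1int k).add (hSV2int k)) (hgUint k) _
      _ =ᵐ[ℙ] (ℙ[(fun ω => Q k k * V1 k ω) | MeasurableSpace.comap Z inferInstance]
          + ℙ[(fun ω => S k ω * V2 k ω) | MeasurableSpace.comap Z inferInstance])
          + ℙ[(fun ω => g k ω * U k ω) | MeasurableSpace.comap Z inferInstance] :=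
        (condExp_add (hQV1int k) (hSV2int k) _).add Filter.EventuallyEq.rfl
      _ =ᵐ[ℙ] fun ω => (Q k k + g k ω) * (d:ℝ)⁻¹ := by
        filter_upwards [hA k, hB k, hC k] with ω h1 h2 h3
        simp only [Pi.add_apply, h1, h2, h3]
        ring
  have hcF2 : ∀ k, ℙ[F2 k | MeasurableSpace.comap Z inferInstance]
      =ᵐ[ℙ] fun ω => (Q k k + g2 k ω) * (d:ℝ)⁻¹ := by
    intro k
    calc ℙ[F2 k | MeasurableSpace.comap Z inferInstance]
        =ᵐ[ℙ] ℙ[(fun ω => Q k k * V1 k ω) | MeasurableSpace.comap Z inferInstance]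
          + ℙ[(fun ω => g2 k ω * U k ω) | MeasurableSpace.comap Z inferInstance] :=
        condExp_add (hQV1int k) (hg2Uint k) _
      _ =ᵐ[ℙ] fun ω => (Q k k + g2 k ω) * (d:ℝ)⁻¹ := by
        filter_upwards [hA k, hC2 k] with ω h1 h3
        simp only [Pi.add_apply, h1, h3]
        ring
  -- decomposition of w' - w
  have hdecomp : ((fun ω => (∑ i, ∑ j, Q i j * (if i = I ω then ζ' i ω else ζ i ω)
        * (if j = I ω then ζ' j ω else ζ j ω)) - Q.trace)
      - fun ω => (∑ i, ∑ j, Q i j * ζ i ω * ζ j ω) - Q.trace)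
      = fun ω => ∑ k, F k ω := by
    funext ω
    simp only [Pi.sub_apply]
    rw [sub_sub_sub_cancel_right, my_quad_diff Q hQ (fun i => ζ i ω) (fun i => ζ' i ω) (I ω)]
    have hFk : ∀ k, F k ω = if I ω = k
        then Q k k * ((ζ' k ω) ^ 2 - (ζ k ω) ^ 2) + S k ω * (ζ' k ω - ζ k ω) else 0 := by
      intro k
      simp only [hFdef, Pi.add_apply, hV1def, hV2def, hgdef, hUdef]
      by_cases h : I ω = k
      · simp only [h, if_true]; ring
      · simp only [h, if_false]; ring
    rw [Finset.sum_congr rfl (fun k _ => hFk k), Finset.sum_ite_eq]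
    simp only [Finset.mem_univ, if_true, hSdef]
  have hdecomp2 : ((fun ω => (∑ i, Q i i * (if i = I ω then ζ' i ω else ζ i ω) ^ 2) - Q.trace)
      - fun ω => (∑ i, Q i i * (ζ i ω) ^ 2) - Q.trace)
      = fun ω => ∑ k, F2 k ω := by
    funext ω
    simp only [Pi.sub_apply]
    rw [sub_sub_sub_cancel_right, my_diag_diff Q (fun i => ζ i ω) (fun i => ζ' i ω) (I ω)]
    have hFk : ∀ k, F2 k ω = if I ω = k
        then Q k k * ((ζ' k ω) ^ 2 - (ζ k ω) ^ 2) else 0 := by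
      intro k
      simp only [hF2def, Pi.add_apply, hV1def, hg2def, hUdef]
      by_cases h : I ω = k
      · simp only [h, if_true]; ring
      · simp only [h, if_false]; ring
    rw [Finset.sum_congr rfl (fun k _ => hFk k), Finset.sum_ite_eq]
    simp only [Finset.mem_univ, if_true]
  -- conditional expectation of the sums
  have hsum1 : ℙ[((fun ω => (∑ i, ∑ j, Q i j * (if i = I ω then ζ' i ω else ζ i ω)
        * (if j = I ω then ζ' j ω else ζ j ω)) - Q.trace)
      - fun ω => (∑ i, ∑ j, Q i j * ζ i ω * ζ j ω) - Q.trace) |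
        MeasurableSpace.comap Z inferInstance]
      =ᵐ[ℙ] fun ω => ∑ k, (Q k k + g k ω) * (d:ℝ)⁻¹ := by
    rw [hdecomp, show (fun ω => ∑ k, F k ω) = ∑ k, F k from funext fun ω => by
      simp [Finset.sum_apply]]
    refine (condExp_finset_sum (fun k _ => hFint k) _).trans ?_
    have hall : ∀ᵐ ω ∂ℙ, ∀ k, (ℙ[F k | MeasurableSpace.comap Z inferInstance]) ω
        = (Q k k + g k ω) * (d:ℝ)⁻¹ := ae_all_iff.mpr hcF
    filter_upwards [hall] with ω hω
    rw [Finset.sum_apply]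
    exact Finset.sum_congr rfl fun k _ => hω k
  have hsum2 : ℙ[((fun ω => (∑ i, Q i i * (if i = I ω then ζ' i ω else ζ i ω) ^ 2) - Q.trace)
      - fun ω => (∑ i, Q i i * (ζ i ω) ^ 2) - Q.trace) |
        MeasurableSpace.comap Z inferInstance]
      =ᵐ[ℙ] fun ω => ∑ k, (Q k k + g2 k ω) * (d:ℝ)⁻¹ := by
    rw [hdecomp2, show (fun ω => ∑ k, F2 k ω) = ∑ k, F2 k from funext fun ω => by
      simp [Finset.sum_apply]]
    refine (condExp_finset_sum (fun k _ => hF2int k) _).trans ?_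
    have hall : ∀ᵐ ω ∂ℙ, ∀ k, (ℙ[F2 k | MeasurableSpace.comap Z inferInstance]) ω
        = (Q k k + g2 k ω) * (d:ℝ)⁻¹ := ae_all_iff.mpr hcF2
    filter_upwards [hall] with ω hω
    rw [Finset.sum_apply]
    exact Finset.sum_congr rfl fun k _ => hω k
  -- final algebra
  have htr : Q.trace = ∑ k, Q k k := by simp [Matrix.trace, Matrix.diag]
  constructor
  · refine hsum1.trans (Filter.Eventually.of_forall fun ω => ?_)
    have hSs : ∑ k, S k ω * ζ k ω
        = 2 * (∑ i, ∑ j, Q i j * ζ i ω * ζ j ω) - 2 * ∑ k, Q k k * (ζ k ω) ^ 2 := by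
      have h1 : ∀ k, S k ω * ζ k ω
          = (∑ j, 2 * Q k j * ζ j ω * ζ k ω) - 2 * Q k k * (ζ k ω) ^ 2 := by
        intro k
        have h2 : S k ω = (∑ j, 2 * Q k j * ζ j ω) - 2 * Q k k * ζ k ω := by
          simp only [hSdef]
          exact Finset.sum_erase_eq_sub (Finset.mem_univ k)
        rw [h2, sub_mul, Finset.sum_mul]
        congr 1
        ring
      calc ∑ k, S k ω * ζ k ω
          = ∑ k, ((∑ j, 2 * Q k j * ζ j ω * ζ k ω) - 2 * Q k k * (ζ k ω) ^ 2) :=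
            Finset.sum_congr rfl fun k _ => h1 k
        _ = (∑ k, ∑ j, 2 * Q k j * ζ j ω * ζ k ω) - ∑ k, 2 * Q k k * (ζ k ω) ^ 2 :=
            Finset.sum_sub_distrib _ _
        _ = 2 * (∑ i, ∑ j, Q i j * ζ i ω * ζ j ω) - 2 * ∑ k, Q k k * (ζ k ω) ^ 2 := by
            rw [Finset.mul_sum, Finset.mul_sum]
            congr 1
            · refine Finset.sum_congr rfl fun i _ => ?_
              rw [Finset.mul_sum]
              exact Finset.sum_congr rfl fun j _ => by ring
            · exact Finset.sum_congr rfl fun k _ => by ring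
    have hgsum : ∑ k, (Q k k + g k ω) * (d:ℝ)⁻¹
        = ((∑ k, Q k k) + (∑ k, Q k k * (ζ k ω) ^ 2)
            - 2 * (∑ i, ∑ j, Q i j * ζ i ω * ζ j ω)) * (d:ℝ)⁻¹ := by
      rw [← Finset.sum_mul]
      congr 1
      simp only [hgdef]
      rw [Finset.sum_add_distrib, Finset.sum_sub_distrib, Finset.sum_neg_distrib, hSs]
      ring
    dsimp only
    rw [hgsum, htr]
    ring
  · refine hsum2.trans (Filter.Eventually.of_forall fun ω => ?_)
    have hgsum : ∑ k, (Q k k + g2 k ω) * (d:ℝ)⁻¹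
        = ((∑ k, Q k k) - (∑ k, Q k k * (ζ k ω) ^ 2)) * (d:ℝ)⁻¹ := by
      rw [← Finset.sum_mul]
      congr 1
      simp only [hg2def]
      rw [Finset.sum_add_distrib, Finset.sum_neg_distrib]
      ring
    dsimp only
    rw [hgsum, htr]
    ring
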